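/- For any connected graph G of order n ≥ 3 with m edges, γ_{rI}(G) ≥ min{γ_{rR}(G), n − 2m/5, n − (2m−5)/3}. -/

import Mathlib

open scoped Classical
open Finset

/-- A restrained Italian dominating function: values in {0,1,2}, every 0-vertex has
neighborhood weight ≥ 2, and every 0-vertex has a 0-neighbor. -/
def IsRIDF {V : Type*} [Fintype V] (G : SimpleGraph V) (f : V → ℕ) : Prop :=
  (∀ v, f v ≤ 2) ∧
  (∀ v, f v = 0 → 2 ≤ ∑ u ∈ Finset.univ.filter (fun u => G.Adj v u), f u) ∧
  (∀ v, f v = 0 → ∃ u, G.Adj v u ∧ f u = 0)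

/-- The restrained Italian domination number. -/
noncomputable def ridNum {V : Type*} [Fintype V] (G : SimpleGraph V) : ℕ :=
  sInf {w | ∃ f : V → ℕ, IsRIDF G f ∧ ∑ v, f v = w}

/-- A restrained dominating set. -/
def IsRDS {V : Type*} [Fintype V] (G : SimpleGraph V) (S : Finset V) : Prop :=
  (∀ v ∉ S, ∃ u ∈ S, G.Adj v u) ∧ (∀ v ∉ S, ∃ u ∉ S, G.Adj v u)

/-- The restrained domination number. -/
noncomputable def rdNum {V : Type*} [Fintype V] (G : SimpleGraph V) : ℕ :=
  sInf {k | ∃ S : Finset V, IsRDS G S ∧ S.card = k}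

/-- A restrained Roman dominating function. -/
def IsRRDF {V : Type*} [Fintype V] (G : SimpleGraph V) (f : V → ℕ) : Prop :=
  (∀ v, f v ≤ 2) ∧
  (∀ v, f v = 0 → ∃ u, G.Adj v u ∧ f u = 2) ∧
  (∀ v, f v = 0 → ∃ u, G.Adj v u ∧ f u = 0)

/-- The restrained Roman domination number. -/
noncomputable def rrdNum {V : Type*} [Fintype V] (G : SimpleGraph V) : ℕ :=
  sInf {w | ∃ f : V → ℕ, IsRRDF G f ∧ ∑ v, f v = w}

theorem stmt3 {V : Type*} [Fintype V] (G : SimpleGraph V)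
    (hc : G.Connected) (hn : 3 ≤ Fintype.card V) :
    min (min (rrdNum G : ℚ) ((Fintype.card V : ℚ) - 2 * G.edgeFinset.card / 5))
      ((Fintype.card V : ℚ) - (2 * G.edgeFinset.card - 5) / 3) ≤ (ridNum G : ℚ) := by
  classical
  -- the infimum is attained
  have hne : {w | ∃ f : V → ℕ, IsRIDF G f ∧ ∑ v, f v = w}.Nonempty :=
    ⟨∑ v : V, (1 : ℕ), (fun _ => 1),
      ⟨fun v => by norm_num, fun v h => by simp at h, fun v h => by simp at h⟩, rfl⟩
  obtain ⟨f, hf, hw⟩ := Nat.sInf_mem hne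
  have hw' : ∑ v, f v = ridNum G := hw
  clear hw hne
  by_cases hcase : ∀ v, f v = 0 → ∃ u, G.Adj v u ∧ f u = 2
  · -- f is a restrained Roman dominating function
    have h1 : rrdNum G ≤ ridNum G := by
      rw [← hw']
      exact Nat.sInf_le ⟨f, ⟨hf.1, hcase, hf.2.2⟩, rfl⟩
    refine le_trans (le_trans (min_le_left _ _) (min_le_left _ _)) ?_
    exact_mod_cast h1
  · push_neg at hcase
    obtain ⟨x, hx0, hx2⟩ := hcase
    obtain ⟨V0, hV0⟩ : ∃ s : Finset V, s = univ.filter (fun v => f v = 0) := ⟨_, rfl⟩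
    obtain ⟨V2, hV2⟩ : ∃ s : Finset V, s = univ.filter (fun v => f v = 2) := ⟨_, rfl⟩
    obtain ⟨d, hd⟩ : ∃ d : V → ℕ,
        ∀ v, d v = (univ.filter (fun u => G.Adj v u ∧ f u ≠ 0)).card := ⟨_, fun _ => rfl⟩
    obtain ⟨D, hD⟩ : ∃ s : Finset (V × V),
        s = (univ ×ˢ univ).filter (fun p => G.Adj p.1 p.2) := ⟨_, rfl⟩
    obtain ⟨D00, hD00⟩ : ∃ s : Finset (V × V),
        s = (univ ×ˢ univ).filter (fun p => G.Adj p.1 p.2 ∧ f p.1 = 0 ∧ f p.2 = 0) := ⟨_, rfl⟩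
    obtain ⟨Dc, hDc⟩ : ∃ s : Finset (V × V),
        s = (univ ×ˢ univ).filter (fun p => G.Adj p.1 p.2 ∧ f p.1 = 0 ∧ f p.2 ≠ 0) := ⟨_, rfl⟩
    obtain ⟨Dc', hDc'⟩ : ∃ s : Finset (V × V),
        s = (univ ×ˢ univ).filter (fun p => G.Adj p.1 p.2 ∧ f p.1 ≠ 0 ∧ f p.2 = 0) := ⟨_, rfl⟩
    -- |D| = sum of degrees = 2m
    have hDcard : D.card = 2 * G.edgeFinset.card := by
      rw [hD, Finset.card_filter, Finset.sum_product,
        ← SimpleGraph.sum_degrees_eq_twice_card_edges]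
      refine Finset.sum_congr rfl fun v _ => ?_
      rw [← Finset.card_filter, SimpleGraph.degree, SimpleGraph.neighborFinset_eq_filter]
    -- partition inequality
    have hsplit : D00.card + Dc.card + Dc'.card ≤ D.card := by
      rw [hD, hD00, hDc, hDc', Finset.card_filter, Finset.card_filter, Finset.card_filter,
        Finset.card_filter, ← Finset.sum_add_distrib, ← Finset.sum_add_distrib]
      refine Finset.sum_le_sum fun p _ => ?_
      split_ifs <;> simp_all
    -- |Dc'| = |Dc|
    have hswap : Dc'.card = Dc.card := by
      refine Finset.card_bij (fun p _ => p.swap) ?_ ?_ ?_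
      · rintro ⟨a, b⟩ hp
        simp only [hDc', Finset.mem_filter] at hp
        simp only [hDc, Finset.mem_filter, Prod.swap]
        exact ⟨Finset.mem_product.mpr ⟨Finset.mem_univ _, Finset.mem_univ _⟩,
          hp.2.1.symm, hp.2.2.2, hp.2.2.1⟩
      · intro a _ b _ h
        simpa using congrArg Prod.swap h
      · rintro ⟨a, b⟩ hp
        refine ⟨(b, a), ?_, rfl⟩
        simp only [hDc, Finset.mem_filter] at hp
        simp only [hDc', Finset.mem_filter]
        exact ⟨Finset.mem_product.mpr ⟨Finset.mem_univ _, Finset.mem_univ _⟩,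
          hp.2.1.symm, hp.2.2.2, hp.2.2.1⟩
    -- |V0| ≤ |D00|
    have hD00card : V0.card ≤ D00.card := by
      choose g hg1 hg2 using hf.2.2
      refine Finset.card_le_card_of_injOn
        (fun v => (v, if h : f v = 0 then g v h else v)) ?_ ?_
      · intro v hv
        rw [hV0, Finset.mem_coe, Finset.mem_filter] at hv
        have hv0 : f v = 0 := hv.2
        simp only [hD00, Finset.mem_coe, Finset.mem_filter, dif_pos hv0]
        exact ⟨Finset.mem_product.mpr ⟨Finset.mem_univ _, Finset.mem_univ _⟩,
          hg1 v hv0, hv0, hg2 v hv0⟩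
      · intro a _ b _ h
        exact (Prod.ext_iff.mp h).1
    -- |Dc| = ∑_{v ∈ V0} d v
    have hDccard : Dc.card = ∑ v ∈ V0, d v := by
      rw [hDc, Finset.card_filter, Finset.sum_product, hV0, Finset.sum_filter]
      refine Finset.sum_congr rfl fun v _ => ?_
      by_cases h : f v = 0
      · rw [if_pos h, hd v, Finset.card_filter]
        exact Finset.sum_congr rfl fun u _ => by simp [h]
      · rw [if_neg h]
        exact Finset.sum_eq_zero fun u _ => by simp [h]
    -- d v ≥ 1 for v ∈ V0
    have hd1 : ∀ v, f v = 0 → 1 ≤ d v := by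
      intro v hv
      have h2 := hf.2.1 v hv
      have hne0 : ∑ u ∈ univ.filter (fun u => G.Adj v u), f u ≠ 0 := by omega
      obtain ⟨u, hu, hfu⟩ := Finset.exists_ne_zero_of_sum_ne_zero hne0
      have hmem : u ∈ univ.filter (fun u => G.Adj v u ∧ f u ≠ 0) := by
        simp only [Finset.mem_filter] at hu ⊢
        exact ⟨hu.1, hu.2, hfu⟩
      rw [hd v]
      exact Nat.one_le_iff_ne_zero.mpr (Finset.card_ne_zero_of_mem hmem)
    -- d v ≥ 2 when v has no 2-neighbor
    have hd2 : ∀ v, f v = 0 → (∀ u, G.Adj v u → f u ≠ 2) → 2 ≤ d v := by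
      intro v hv hno2
      have h2 := hf.2.1 v hv
      have hstep : ∑ u ∈ univ.filter (fun u => G.Adj v u), f u
          = ∑ u ∈ (univ.filter (fun u => G.Adj v u)).filter (fun u => f u ≠ 0), f u :=
        (Finset.sum_filter_ne_zero _).symm
      have hle : ∑ u ∈ (univ.filter (fun u => G.Adj v u)).filter (fun u => f u ≠ 0), f u
          ≤ ((univ.filter (fun u => G.Adj v u)).filter (fun u => f u ≠ 0)).card • 1 := by
        refine Finset.sum_le_card_nsmul _ _ 1 ?_
        intro u hu
        simp only [Finset.mem_filter] at hu
        have h3 := hf.1 u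
        have h4 := hno2 u hu.1.2
        omega
      have heq : (univ.filter (fun u => G.Adj v u)).filter (fun u => f u ≠ 0)
          = univ.filter (fun u => G.Adj v u ∧ f u ≠ 0) := by
        rw [Finset.filter_filter]
      rw [hstep, heq] at h2
      rw [heq] at hle
      simp only [smul_eq_mul, mul_one] at hle
      rw [hd v]
      omega
    -- x ∈ V0
    have hxV0 : x ∈ V0 := by
      rw [hV0]
      exact Finset.mem_filter.mpr ⟨Finset.mem_univ _, hx0⟩
    -- key identity: n + |V2| = w + |V0|
    have hkey : Fintype.card V + V2.card = (∑ v, f v) + V0.card := by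
      rw [hV2, hV0, ← Finset.card_univ, Finset.card_eq_sum_ones, Finset.card_filter,
        Finset.card_filter, ← Finset.sum_add_distrib, ← Finset.sum_add_distrib]
      refine Finset.sum_congr rfl fun v _ => ?_
      have h3 := hf.1 v
      by_cases h2 : f v = 2 <;> by_cases h0 : f v = 0 <;> simp [h2, h0] <;> omega
    by_cases hV2e : V2.card = 0
    · -- V2 empty : use the second branch, 5n ≤ 2m + 5w
      have hall : ∀ v ∈ V0, 2 ≤ d v := by
        intro v hv
        rw [hV0, Finset.mem_filter] at hv
        refine hd2 v hv.2 fun u hu h2 => ?_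
        have hu2 : u ∈ V2 := by
          rw [hV2]
          exact Finset.mem_filter.mpr ⟨Finset.mem_univ _, h2⟩
        rw [Finset.card_eq_zero] at hV2e
        rw [hV2e] at hu2
        simp at hu2
      have hsum2 : 2 * V0.card ≤ ∑ v ∈ V0, d v := by
        calc 2 * V0.card = ∑ _v ∈ V0, 2 := by rw [Finset.sum_const, smul_eq_mul, mul_comm]
          _ ≤ ∑ v ∈ V0, d v := Finset.sum_le_sum hall
      have hfinal : 5 * Fintype.card V ≤ 2 * G.edgeFinset.card + 5 * ridNum G := by omega
      refine le_trans (le_trans (min_le_left _ _) (min_le_right _ _)) ?_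
      have hc5 : (5 : ℚ) * Fintype.card V ≤ 2 * G.edgeFinset.card + 5 * ridNum G := by
        exact_mod_cast hfinal
      linarith
    · -- V2 nonempty : use the third branch, 3n + 5 ≤ 2m + 3w
      have hV2pos : 1 ≤ V2.card := Nat.pos_of_ne_zero hV2e
      have hsum1 : V0.card + 1 ≤ ∑ v ∈ V0, d v := by
        rw [← Finset.sum_erase_add V0 d hxV0]
        have h1 : ∀ v ∈ V0.erase x, 1 ≤ d v := by
          intro v hv
          have hv' := Finset.mem_of_mem_erase hv
          rw [hV0, Finset.mem_filter] at hv'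
          exact hd1 v hv'.2
        have h2 : (V0.erase x).card ≤ ∑ v ∈ V0.erase x, d v := by
          calc (V0.erase x).card = ∑ _v ∈ V0.erase x, 1 := by
                rw [Finset.sum_const, smul_eq_mul, mul_one]
            _ ≤ _ := Finset.sum_le_sum h1
        have h3 : 2 ≤ d x := hd2 x hx0 (fun u hu => hx2 u hu)
        have h4 : (V0.erase x).card = V0.card - 1 := Finset.card_erase_of_mem hxV0
        have h5 : 1 ≤ V0.card := Finset.card_pos.mpr ⟨x, hxV0⟩
        omega
      have hfinal : 3 * Fintype.card V + 5 ≤ 2 * G.edgeFinset.card + 3 * ridNum G := by omega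
      refine le_trans (min_le_right _ _) ?_
      have hc3 : (3 : ℚ) * Fintype.card V + 5 ≤ 2 * G.edgeFinset.card + 3 * ridNum G := by
        exact_mod_cast hfinal
      linarith
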